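/- Let D be a finite digraph on a vertex set of even cardinality 2p, with no digons, equipped with a friendly (0,1)-labeling f whose induced arc labeling g satisfies Λ_{f,g}(D) = (α, β, γ). Form the digraph D' consisting of two disjoint copies of D, where the first copy carries the labeling f and the second copy carries the complementary labeling f̄ (f̄(v) = 1 − f(v)), together with an arc from each vertex x of the first copy to the corresponding vertex x of the second copy. Then the vertex labeling of D' combining f on the first copy and f̄ on the second copy is friendly, and its induced arc labeling g' satisfies Λ(D') = (α + β + p, α + β + p, 2γ). -/

import Mathlib

open Finset

/-- The induced arc label: `g(u→v) = f(v) - f(u)`, as an integer. -/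
def arcLabel {V : Type*} (f : V → Fin 2) (p : V × V) : ℤ :=
  (f p.2 : ℤ) - (f p.1 : ℤ)

/-- The number of arcs of `A` receiving induced label `i` from the vertex labeling `f`. -/
def labelCount {V : Type*} (A : Finset (V × V)) (f : V → Fin 2) (i : ℤ) : ℕ :=
  (A.filter (fun p => arcLabel f p = i)).card

/-- A `(0,1)`-labeling is friendly if `-1 ≤ |f⁻¹(0)| - |f⁻¹(1)| ≤ 1`. -/
def Friendly {V : Type*} [Fintype V] (f : V → Fin 2) : Prop :=
  -1 ≤ (((univ.filter (fun v => f v = 0)).card : ℤ) -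
        ((univ.filter (fun v => f v = 1)).card : ℤ)) ∧
  (((univ.filter (fun v => f v = 0)).card : ℤ) -
        ((univ.filter (fun v => f v = 1)).card : ℤ)) ≤ 1

/-- A digraph (given by its arc set `A`) is `(2,3)`-cordial if some friendly vertex
labeling induces an arc labeling in which the counts of labels `-1, 0, 1`
pairwise differ by at most one. -/
def Cordial23 {V : Type*} [Fintype V] (A : Finset (V × V)) : Prop :=
  ∃ f : V → Fin 2, Friendly f ∧
    ∀ i ∈ ({-1, 0, 1} : Finset ℤ), ∀ j ∈ ({-1, 0, 1} : Finset ℤ),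
      -1 ≤ ((labelCount A f i : ℤ) - (labelCount A f j : ℤ)) ∧
      ((labelCount A f i : ℤ) - (labelCount A f j : ℤ)) ≤ 1

/-- `A` has no digons (in particular, no loops). -/
def NoDigons {V : Type*} (A : Finset (V × V)) : Prop :=
  ∀ u v : V, (u, v) ∈ A → (v, u) ∉ A

/-- Two disjoint copies of the digraph `A` together with an arc from each vertex
`x` of the first copy to the corresponding vertex `x` of the second copy. -/
def doubleCross {V : Type*} [Fintype V] [DecidableEq V] (A : Finset (V × V)) :
    Finset ((V ⊕ V) × (V ⊕ V)) :=
  A.image (fun q => (Sum.inl q.1, Sum.inl q.2)) ∪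
    A.image (fun q => (Sum.inr q.1, Sum.inr q.2)) ∪
    Finset.univ.image (fun v : V => ((Sum.inl v : V ⊕ V), (Sum.inr v : V ⊕ V)))


section Aux
variable {V : Type*} [Fintype V] [DecidableEq V]

lemma coe_one_sub (x : Fin 2) : ((1 - x : Fin 2) : ℤ) = 1 - (x : ℤ) := by
  fin_cases x <;> decide

lemma fin2_ne (x : Fin 2) : (¬ x = 0) ↔ x = 1 := by fin_cases x <;> decide

lemma fin2_sub_zero (x : Fin 2) : ((1 - x : Fin 2) = 0) ↔ x = 1 := by fin_cases x <;> decide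

lemma fin2_sub_one (x : Fin 2) : ((1 - x : Fin 2) = 1) ↔ x = 0 := by fin_cases x <;> decide

lemma filter_sum_card (P : V ⊕ V → Prop) [DecidablePred P] :
    ((univ : Finset (V ⊕ V)).filter P).card
      = (univ.filter (fun v => P (Sum.inl v))).card
        + (univ.filter (fun v => P (Sum.inr v))).card := by
  rw [← Finset.card_image_of_injective (univ.filter fun v => P (Sum.inl v))
        (Sum.inl_injective : Function.Injective (Sum.inl : V → V ⊕ V)),
      ← Finset.card_image_of_injective (univ.filter fun v => P (Sum.inr v))
        (Sum.inr_injective : Function.Injective (Sum.inr : V → V ⊕ V)),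
      ← Finset.card_union_of_disjoint]
  · congr 1
    ext x
    rcases x with v | v <;> simp
  · simp [Finset.disjoint_left]

lemma count_double (A : Finset (V × V)) (f : V → Fin 2) (i : ℤ) :
    labelCount (doubleCross A) (Sum.elim f (fun v => 1 - f v)) i
      = labelCount A f i + labelCount A f (-i)
        + (univ.filter (fun v => 1 - 2 * ((f v : ℕ) : ℤ) = i)).card := by
  classical
  unfold labelCount doubleCross
  rw [Finset.filter_union, Finset.filter_union,
      Finset.card_union_of_disjoint, Finset.card_union_of_disjoint]
  · congr 1
    · congr 1
      · rw [Finset.filter_image, Finset.card_image_of_injective]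
        · apply congrArg Finset.card
          apply Finset.filter_congr
          intro q _
          simp [arcLabel]
        · intro a b h
          simp only [Prod.mk.injEq, Sum.inl.injEq] at h
          exact Prod.ext h.1 h.2
      · rw [Finset.filter_image, Finset.card_image_of_injective]
        · apply congrArg Finset.card
          apply Finset.filter_congr
          intro q _
          simp only [arcLabel, Sum.elim_inr, decide_eq_decide]
          rw [coe_one_sub, coe_one_sub]
          constructor <;> intro h <;> omega
        · intro a b h
          simp only [Prod.mk.injEq, Sum.inr.injEq] at h
          exact Prod.ext h.1 h.2
    · rw [Finset.filter_image, Finset.card_image_of_injective]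
      · apply congrArg Finset.card
        apply Finset.filter_congr
        intro v _
        simp only [arcLabel, Sum.elim_inl, Sum.elim_inr, decide_eq_decide]
        rw [coe_one_sub]
        constructor <;> intro h <;> omega
      · intro a b h
        simpa using h
  · apply Finset.disjoint_filter_filter
    simp [Finset.disjoint_left]
  · rw [Finset.disjoint_left]
    intro x hx hx'
    simp only [Finset.mem_union, Finset.mem_filter, Finset.mem_image] at hx hx'
    obtain ⟨⟨v, _, rfl⟩, -⟩ := hx'
    rcases hx with ⟨⟨q, _, h⟩, -⟩ | ⟨⟨q, _, h⟩, -⟩ <;> simp at h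

lemma filter_eq_p (f : V → Fin 2) (hf : Friendly f) (p : ℕ)
    (hcard : Fintype.card V = 2 * p) :
    (univ.filter (fun v => f v = 0)).card = p ∧
    (univ.filter (fun v => f v = 1)).card = p := by
  have hsum : (univ.filter (fun v => f v = 0)).card
      + (univ.filter (fun v => f v = 1)).card = Fintype.card V := by
    have key := Finset.card_filter_add_card_filter_not
      (s := (univ : Finset V)) (p := fun v => f v = 0)
    have heq : (univ.filter (fun v => ¬ f v = 0)) = univ.filter (fun v => f v = 1) :=
      Finset.filter_congr (fun v _ => by simp [fin2_ne])
    rw [heq, Finset.card_univ] at key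
    exact key
  obtain ⟨hl, hr⟩ := hf
  rw [hcard] at hsum
  omega

end Aux

/-- Doubling a digon-free digraph on `2p` vertices, labeling the second copy by
the complementary labeling and joining corresponding vertices, yields a friendly
labeling with `Λ = (α + β + p, α + β + p, 2γ)`. -/
theorem double_with_complement {V : Type*} [Fintype V] [DecidableEq V]
    (A : Finset (V × V)) (hA : NoDigons A) (p : ℕ) (hcard : Fintype.card V = 2 * p)
    (f : V → Fin 2) (hf : Friendly f) (α β γ : ℕ)
    (h1 : labelCount A f 1 = α) (h2 : labelCount A f (-1) = β)
    (h3 : labelCount A f 0 = γ) :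
    Friendly (Sum.elim f (fun v => 1 - f v)) ∧
    labelCount (doubleCross A) (Sum.elim f (fun v => 1 - f v)) 1 = α + β + p ∧
    labelCount (doubleCross A) (Sum.elim f (fun v => 1 - f v)) (-1) = α + β + p ∧
    labelCount (doubleCross A) (Sum.elim f (fun v => 1 - f v)) 0 = 2 * γ := by
  classical
  obtain ⟨ha, hb⟩ := filter_eq_p f hf p hcard
  have hF0 : ((univ : Finset (V ⊕ V)).filter
      (fun x => Sum.elim f (fun v => 1 - f v) x = 0)).card = 2 * p := by
    rw [filter_sum_card]
    simp only [Sum.elim_inl, Sum.elim_inr]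
    have : (univ.filter (fun v => (1 - f v : Fin 2) = 0)).card = p := by
      rw [← hb]; apply Finset.card_bij (fun a _ => a) <;>
        simp +contextual [fin2_sub_zero]
    change (univ.filter (fun v => f v = 0)).card + (univ.filter (fun v => (1 - f v : Fin 2) = 0)).card = 2 * p
    omega
  have hF1 : ((univ : Finset (V ⊕ V)).filter
      (fun x => Sum.elim f (fun v => 1 - f v) x = 1)).card = 2 * p := by
    rw [filter_sum_card]
    simp only [Sum.elim_inl, Sum.elim_inr]
    have : (univ.filter (fun v => (1 - f v : Fin 2) = 1)).card = p := by
      rw [← ha]; apply Finset.card_bij (fun a _ => a) <;>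
        simp +contextual [fin2_sub_one]
    change (univ.filter (fun v => f v = 1)).card + (univ.filter (fun v => (1 - f v : Fin 2) = 1)).card = 2 * p
    omega
  refine ⟨⟨by rw [hF0, hF1]; omega, by rw [hF0, hF1]; omega⟩, ?_, ?_, ?_⟩
  · rw [count_double]
    have : (univ.filter (fun v => 1 - 2 * ((f v : ℕ) : ℤ) = 1)).card = p := by
      rw [← ha]; apply congrArg Finset.card; apply Finset.filter_congr; intro v _
      have := (f v).isLt
      constructor <;> intro h
      · have : (f v : ℕ) = 0 := by omega
        exact Fin.ext this
      · simp [h]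
    rw [this, h2]
    have : labelCount A f (-1 : ℤ) = labelCount A f (-(1:ℤ)) := rfl
    omega
  · rw [count_double]
    have : (univ.filter (fun v => 1 - 2 * ((f v : ℕ) : ℤ) = -1)).card = p := by
      rw [← hb]; apply congrArg Finset.card; apply Finset.filter_congr; intro v _
      have := (f v).isLt
      constructor <;> intro h
      · have : (f v : ℕ) = 1 := by omega
        exact Fin.ext this
      · simp [h]
    rw [this]
    simp only [neg_neg]
    omega
  · rw [count_double]
    have : (univ.filter (fun v => 1 - 2 * ((f v : ℕ) : ℤ) = 0)).card = 0 := by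
      rw [Finset.card_eq_zero, Finset.filter_eq_empty_iff]
      intro v _
      have := (f v).isLt
      omega
    rw [this, neg_zero, h3]
    omega
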